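/- arXiv:1810.00765 — 6 statements merged into one kernel-verified Lean document; each statement's English description precedes it below -/
import Mathlib

section
/- Let F be a field of characteristic not equal to 2, with the quadratic form ‖v‖ = v₁² + v₂² on F². If a ≠ b in F² and ‖a-b‖ = 0, then either ‖a‖ = ‖b‖ = 0 or ‖a‖ ≠ ‖b‖. -/
noncomputable section

/-- The standard quadratic form on `F × F`. -/
def nrm {F : Type*} [Field F] (v : F × F) : F := v.1 ^ 2 + v.2 ^ 2

/-- if `a ≠ b` and `‖a - b‖ = 0`, then either `‖a‖ = ‖b‖ = 0`
or `‖a‖ ≠ ‖b‖`. -/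
theorem stmt_0 {F : Type*} [Field F] (hchar : (2 : F) ≠ 0)
    (a b : F × F) (hab : a ≠ b) (h0 : nrm (a - b) = 0) :
    (nrm a = 0 ∧ nrm b = 0) ∨ nrm a ≠ nrm b := by
  by_cases h : nrm a = nrm b
  · left
    obtain ⟨a1, a2⟩ := a
    obtain ⟨b1, b2⟩ := b
    simp only [nrm, Prod.mk_sub_mk, ne_eq, Prod.mk.injEq, not_and] at *
    set d1 := a1 - b1 with hd1
    set d2 := a2 - b2 with hd2
    -- h0 : d1^2 + d2^2 = 0
    have hd1ne : d1 ≠ 0 := by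
      intro hz
      have hz2 : d2 ^ 2 = 0 := by linear_combination h0 - hz * d1
      have hz2' : d2 = 0 := by exact pow_eq_zero_iff (by norm_num) |>.mp hz2
      have : a1 = b1 := by linear_combination hz
      have : a2 = b2 := by linear_combination hz2'
      exact hab ‹a1 = b1› this
    -- orthogonality: b1*d1 + b2*d2 = 0
    have hk : b1 * d1 + b2 * d2 = 0 := by
      have h2 : (2 : F) * (b1 * d1 + b2 * d2) = 0 := by
        linear_combination h - h0
      rcases mul_eq_zero.mp h2 with h' | h'
      · exact absurd h' hchar
      · exact h'
    have hb : b1 ^ 2 + b2 ^ 2 = 0 := by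
      have hmain : (b1 ^ 2 + b2 ^ 2) * d1 ^ 2 = 0 := by
        linear_combination (b1 * d1 - b2 * d2) * hk + b2 ^ 2 * h0
      rcases mul_eq_zero.mp hmain with h' | h'
      · exact h'
      · exact absurd (pow_eq_zero_iff (by norm_num) |>.mp h') hd1ne
    refine ⟨?_, hb⟩
    linear_combination h + hb
  · right; exact h
end
end

section
/- Let F be a field of characteristic not equal to 2, with the quadratic form ‖v‖ = v₁² + v₂² and bilinear form a·b = a₁b₁ + a₂b₂ on F². If a ≠ b, ‖a‖ = ‖b‖ ≠ 0, c ≠ 0 and ‖c‖ = 0, then ‖a - c‖ ≠ ‖b - c‖. -/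
noncomputable section

/-- The associated bilinear form on `F × F`. -/
def dotp {F : Type*} [Field F] (a b : F × F) : F := a.1 * b.1 + a.2 * b.2

/-- if `a ≠ b`, `‖a‖ = ‖b‖ ≠ 0`, `c ≠ 0` and `‖c‖ = 0`,
then `‖a - c‖ ≠ ‖b - c‖`. -/
theorem stmt_1 {F : Type*} [Field F] (hchar : (2 : F) ≠ 0)
    (a b c : F × F) (hab : a ≠ b) (habn : nrm a = nrm b) (ha0 : nrm a ≠ 0)
    (hc : c ≠ 0) (hc0 : nrm c = 0) :
    nrm (a - c) ≠ nrm (b - c) := by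
  intro h
  obtain ⟨a1, a2⟩ := a
  obtain ⟨b1, b2⟩ := b
  obtain ⟨c1, c2⟩ := c
  simp only [nrm, Prod.mk_sub_mk, Prod.mk.injEq, not_and, ne_eq, Prod.ext_iff,
    Prod.fst_zero, Prod.snd_zero] at *
  -- c1 ≠ 0 and c2 ≠ 0
  have hc1 : c1 ≠ 0 := by
    intro h1
    have h2 : c2 = 0 := by
      have : c2 ^ 2 = 0 := by linear_combination hc0 - c1 * h1
      exact pow_eq_zero_iff (n := 2) (by norm_num) |>.mp this
    exact hc h1 h2
  -- dot products equal
  have hdot : a1 * c1 + a2 * c2 = b1 * c1 + b2 * c2 := by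
    have h2 : 2 * (a1 * c1 + a2 * c2) = 2 * (b1 * c1 + b2 * c2) := by
      linear_combination habn - h
    exact mul_left_cancel₀ hchar h2
  -- (a1 - b1) * c2 = (a2 - b2) * c1
  have key : c1 * ((a1 - b1) * c2 - (a2 - b2) * c1) = 0 := by
    linear_combination c2 * hdot - (a2 - b2) * hc0
  have huv : (a1 - b1) * c2 = (a2 - b2) * c1 := by
    rcases mul_eq_zero.mp key with h' | h'
    · exact absurd h' hc1
    · linear_combination h'
  -- a1 ≠ b1
  have hu : a1 - b1 ≠ 0 := by
    intro h1
    have h2 : (a2 - b2) * c1 = 0 := by linear_combination c2 * h1 - huv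
    rcases mul_eq_zero.mp h2 with h' | h'
    · exact hab (by linear_combination h1) (by linear_combination h')
    · exact absurd h' hc1
  -- u^2 + v^2 = 0 where u = a1 - b1, v = a2 - b2
  have huv0 : ((a1 - b1) ^ 2 + (a2 - b2) ^ 2) * c1 ^ 2 = 0 := by
    linear_combination (a1 - b1) ^ 2 * hc0 - ((a2 - b2) * c1 + (a1 - b1) * c2) * huv
  have huv0' : (a1 - b1) ^ 2 + (a2 - b2) ^ 2 = 0 := by
    rcases mul_eq_zero.mp huv0 with h' | h'
    · exact h'
    · exact absurd (pow_eq_zero_iff (n := 2) (by norm_num) |>.mp h') hc1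
  -- u*b1 + v*b2 = 0
  have hb : (a1 - b1) * b1 + (a2 - b2) * b2 = 0 := by
    have h2 : 2 * ((a1 - b1) * b1 + (a2 - b2) * b2) = 2 * 0 := by
      linear_combination habn - huv0'
    exact mul_left_cancel₀ hchar h2
  -- b1 * c1 + b2 * c2 = 0
  have hbc : b1 * c1 + b2 * c2 = 0 := by
    have h2 : (a1 - b1) * (b1 * c1 + b2 * c2) = 0 := by
      linear_combination c1 * hb + b2 * huv
    rcases mul_eq_zero.mp h2 with h' | h'
    · exact absurd h' hu
    · exact h'
  -- b1 * c2 = b2 * c1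
  have key2 : c1 * (b1 * c2 - b2 * c1) = 0 := by
    linear_combination c2 * hbc - b2 * hc0
  have hbcc : b1 * c2 = b2 * c1 := by
    rcases mul_eq_zero.mp key2 with h' | h'
    · exact absurd h' hc1
    · linear_combination h'
  -- nrm b = 0, contradiction
  have hnb : (b1 ^ 2 + b2 ^ 2) * c1 ^ 2 = 0 := by
    linear_combination b1 ^ 2 * hc0 - (b2 * c1 + b1 * c2) * hbcc
  rcases mul_eq_zero.mp hnb with h' | h'
  · exact ha0 (by linear_combination habn + h')
  · exact absurd (pow_eq_zero_iff (n := 2) (by norm_num) |>.mp h') hc1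
end
end

section
/- Let F be a field of characteristic not equal to 2. Suppose ℓ ⊂ F² is the perpendicular bisector of a pair of points a ≠ b with ‖a - b‖ ≠ 0, i.e. ℓ = {x ∈ F² : ‖a - x‖ = ‖b - x‖}, and suppose ℓ is a line. Then ℓ is not isotropic; that is, for any two distinct points p, q ∈ ℓ, ‖p - q‖ ≠ 0. -/
noncomputable section

/-- a perpendicular bisector is not isotropic: any two distinct
points `p, q` of the bisector of `a, b` satisfy `‖p - q‖ ≠ 0`. -/
theorem stmt_2 {F : Type*} [Field F] (hchar : (2 : F) ≠ 0)
    (a b : F × F) (hab : a ≠ b) (hab0 : nrm (a - b) ≠ 0)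
    (ℓ : Set (F × F)) (hℓ : ℓ = {x | nrm (a - x) = nrm (b - x)}) :
    ∀ p ∈ ℓ, ∀ q ∈ ℓ, p ≠ q → nrm (p - q) ≠ 0 := by
  subst hℓ
  intro p hp q hq hpq h0
  simp only [Set.mem_setOf_eq, nrm, Prod.fst_sub, Prod.snd_sub] at hp hq h0 hab0
  -- dot product condition
  have h2 : (2 : F) * ((a.1 - b.1) * (p.1 - q.1) + (a.2 - b.2) * (p.2 - q.2)) = 0 := by
    linear_combination hq - hp
  have hd : (a.1 - b.1) * (p.1 - q.1) + (a.2 - b.2) * (p.2 - q.2) = 0 :=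
    (mul_eq_zero.mp h2).resolve_left hchar
  have hcross2 : ((a.1 - b.1) * (p.2 - q.2) - (a.2 - b.2) * (p.1 - q.1)) ^ 2 = 0 := by
    linear_combination ((a.1 - b.1) ^ 2 + (a.2 - b.2) ^ 2) * h0 -
      ((a.1 - b.1) * (p.1 - q.1) + (a.2 - b.2) * (p.2 - q.2)) * hd
  have hcross : (a.1 - b.1) * (p.2 - q.2) - (a.2 - b.2) * (p.1 - q.1) = 0 :=
    (pow_eq_zero_iff (two_ne_zero)).mp hcross2
  have hv : p.1 - q.1 ≠ 0 ∨ p.2 - q.2 ≠ 0 := by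
    by_contra h
    push_neg at h
    exact hpq (Prod.ext (sub_eq_zero.mp h.1) (sub_eq_zero.mp h.2))
  rcases hv with hv | hv
  · apply hab0
    have : ((a.1 - b.1) ^ 2 + (a.2 - b.2) ^ 2) * (p.1 - q.1) = 0 := by
      linear_combination (a.1 - b.1) * hd - (a.2 - b.2) * hcross
    exact (mul_eq_zero.mp this).resolve_right hv
  · apply hab0
    have : ((a.1 - b.1) ^ 2 + (a.2 - b.2) ^ 2) * (p.2 - q.2) = 0 := by
      linear_combination (a.2 - b.2) * hd + (a.1 - b.1) * hcross
    exact (mul_eq_zero.mp this).resolve_right hv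
end
end

section
/- Let F be a field of characteristic not equal to 2, and let a, b ∈ F² with ‖a - b‖ ≠ 0. Then there exists a line ℓ (non-isotropic) and a reflection r_ℓ over ℓ with r_ℓ(a) = b; moreover, for any non-isotropic line ℓ, r_ℓ(a) = b if and only if ℓ is the perpendicular bisector B(a,b) = {x : ‖a-x‖ = ‖b-x‖}. -/
noncomputable section

/-- Reflection over the line `{λ • u + v : u · v = 0}`, for `‖u‖ ≠ 0`. -/
def reflLine {F : Type*} [Field F] (u : F × F) (lam : F) (a : F × F) : F × F :=
  a - (2 * dotp a u / nrm u) • u + (2 * lam) • u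

/-- The (non-isotropic) line `{λ • u + v : u · v = 0}`. -/
def lineOf {F : Type*} [Field F] (u : F × F) (lam : F) : Set (F × F) :=
  {x | ∃ v, dotp u v = 0 ∧ x = lam • u + v}

/-- The perpendicular bisector of `a` and `b`. -/
def bisector {F : Type*} [Field F] (a b : F × F) : Set (F × F) :=
  {x | nrm (a - x) = nrm (b - x)}

lemma mem_lineOf {F : Type*} [Field F] (u : F × F) (lam : F) (x : F × F) :
    x ∈ lineOf u lam ↔ dotp u x = lam * nrm u := by
  constructor
  · rintro ⟨v, hv, rfl⟩
    simp only [dotp, nrm, Prod.fst_add, Prod.snd_add, Prod.smul_fst, Prod.smul_snd,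
      smul_eq_mul] at *
    linear_combination hv
  · intro h
    refine ⟨x - lam • u, ?_, by abel⟩
    simp only [dotp, nrm, Prod.fst_sub, Prod.snd_sub, Prod.smul_fst, Prod.smul_snd,
      smul_eq_mul] at *
    linear_combination h

lemma mem_bisector {F : Type*} [Field F] (a b x : F × F) :
    x ∈ bisector a b ↔ 2 * dotp (a - b) x = nrm a - nrm b := by
  simp only [bisector, Set.mem_setOf_eq, nrm, dotp, Prod.fst_sub, Prod.snd_sub]
  constructor <;> intro h <;> linear_combination -h

lemma scalar_key {F : Type*} [Field F] (hchar : (2:F) ≠ 0) (a1 a2 b1 b2 u1 u2 lam : F)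
    (hab : (a1-b1)^2+(a2-b2)^2 ≠ 0) (hu : u1^2+u2^2 ≠ 0) :
    (a1 - 2*(a1*u1+a2*u2)/(u1^2+u2^2)*u1 + 2*lam*u1 = b1 ∧
     a2 - 2*(a1*u1+a2*u2)/(u1^2+u2^2)*u2 + 2*lam*u2 = b2)
    ↔ ∀ x1 x2 : F, u1*x1+u2*x2 = lam*(u1^2+u2^2) ↔
        2*((a1-b1)*x1+(a2-b2)*x2) = a1^2+a2^2-(b1^2+b2^2) := by
  constructor
  · rintro ⟨h1, h2⟩
    field_simp at h1 h2
    obtain ⟨s, hc1, hc2⟩ : ∃ s, a1 - b1 = s*u1 ∧ a2 - b2 = s*u2 := by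
      refine ⟨(2*(a1*u1+a2*u2)-2*lam*(u1^2+u2^2))/(u1^2+u2^2), ?_, ?_⟩ <;>
        · field_simp
          try linear_combination h1
          try linear_combination h2
    have ea1 : a1 = b1 + s*u1 := by linear_combination hc1
    have ea2 : a2 = b2 + s*u2 := by linear_combination hc2
    have hs0 : s ≠ 0 := by
      intro h0
      exact hab (by rw [hc1, hc2, h0]; ring)
    have hlam : 2*lam*(u1^2+u2^2) = 2*(u1*b1+u2*b2) + s*(u1^2+u2^2) := by
      have h3 : (u1^2+u2^2)*(2*lam*(u1^2+u2^2)) =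
          (u1^2+u2^2)*(2*(u1*b1+u2*b2) + s*(u1^2+u2^2)) := by
        rw [ea1, ea2] at h1 h2
        linear_combination u1*h1 + u2*h2
      exact mul_left_cancel₀ hu h3
    intro x1 x2
    constructor
    · intro hx
      rw [ea1, ea2]
      linear_combination 2*s*hx + s*hlam
    · intro hx
      rw [ea1, ea2] at hx
      have h2 : (2*s)*(u1*x1+u2*x2) = (2*s)*(lam*(u1^2+u2^2)) := by
        linear_combination hx - s*hlam
      exact mul_left_cancel₀ (mul_ne_zero hchar hs0) h2
  · intro H
    have e1 := (H (lam*u1) (lam*u2)).mp (by ring)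
    have e2 := (H (lam*u1 - u2) (lam*u2 + u1)).mp (by ring)
    have hperp : (a1-b1)*u2 = (a2-b2)*u1 := by
      have h2p : 2*((a1-b1)*u2) = 2*((a2-b2)*u1) := by linear_combination e1 - e2
      exact mul_left_cancel₀ hchar h2p
    obtain ⟨s, hc1, hc2⟩ : ∃ s, a1 - b1 = s*u1 ∧ a2 - b2 = s*u2 := by
      refine ⟨((a1-b1)*u1+(a2-b2)*u2)/(u1^2+u2^2), ?_, ?_⟩ <;>
        · field_simp
          try linear_combination u2*hperp
          try linear_combination (-u1)*hperp
    have ea1 : a1 = b1 + s*u1 := by linear_combination hc1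
    have ea2 : a2 = b2 + s*u2 := by linear_combination hc2
    have hs0 : s ≠ 0 := by
      intro h0
      exact hab (by rw [hc1, hc2, h0]; ring)
    have hlam : 2*lam*(u1^2+u2^2) = 2*(u1*b1+u2*b2) + s*(u1^2+u2^2) := by
      rw [ea1, ea2] at e1
      have h3 : s*(2*lam*(u1^2+u2^2)) = s*(2*(u1*b1+u2*b2) + s*(u1^2+u2^2)) := by
        linear_combination e1
      exact mul_left_cancel₀ hs0 h3
    constructor <;>
      · rw [ea1, ea2]
        field_simp
        try linear_combination u1*hlam
        try linear_combination u2*hlam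

/-- for `‖a - b‖ ≠ 0` there is a reflection taking `a` to `b`;
moreover a reflection over a non-isotropic line takes `a` to `b` iff the line
is the perpendicular bisector of `a` and `b`. -/
theorem stmt_3 {F : Type*} [Field F] (hchar : (2 : F) ≠ 0)
    (a b : F × F) (hab : nrm (a - b) ≠ 0) :
    (∃ u lam, nrm u ≠ 0 ∧ reflLine u lam a = b) ∧
    (∀ u lam, nrm u ≠ 0 → (reflLine u lam a = b ↔ lineOf u lam = bisector a b)) := by
  obtain ⟨a1, a2⟩ := a
  obtain ⟨b1, b2⟩ := b
  have hab' : (a1-b1)^2+(a2-b2)^2 ≠ 0 := by simpa [nrm] using hab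
  constructor
  · refine ⟨(a1-b1, a2-b2),
      (a1*(a1-b1)+a2*(a2-b2))/((a1-b1)^2+(a2-b2)^2) - 1/2,
      by simpa [nrm] using hab', ?_⟩
    simp only [reflLine, dotp, nrm, Prod.ext_iff, Prod.fst_sub, Prod.snd_sub,
      Prod.fst_add, Prod.snd_add, Prod.smul_fst, Prod.smul_snd, smul_eq_mul]
    constructor <;> field_simp <;> ring
  · intro u lam hu
    obtain ⟨u1, u2⟩ := u
    have hu' : (u1:F)^2+u2^2 ≠ 0 := by simpa [nrm] using hu
    have H := scalar_key hchar a1 a2 b1 b2 u1 u2 lam hab' hu'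
    have hb1 : (reflLine (u1,u2) lam (a1,a2) = (b1,b2)) ↔
        (a1 - 2*(a1*u1+a2*u2)/(u1^2+u2^2)*u1 + 2*lam*u1 = b1 ∧
         a2 - 2*(a1*u1+a2*u2)/(u1^2+u2^2)*u2 + 2*lam*u2 = b2) := by
      simp only [reflLine, dotp, nrm, Prod.mk.injEq, Prod.ext_iff, Prod.fst_sub,
        Prod.snd_sub, Prod.fst_add, Prod.snd_add, Prod.smul_fst, Prod.smul_snd, smul_eq_mul]
    have hb2 : (lineOf (u1,u2) lam = bisector (a1,a2) (b1,b2)) ↔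
        ∀ x1 x2 : F, u1*x1+u2*x2 = lam*(u1^2+u2^2) ↔
          2*((a1-b1)*x1+(a2-b2)*x2) = a1^2+a2^2-(b1^2+b2^2) := by
      rw [Set.ext_iff]
      constructor
      · intro h x1 x2
        have := h (x1, x2)
        rw [mem_lineOf, mem_bisector] at this
        simp only [dotp, nrm, Prod.fst_sub, Prod.snd_sub] at this
        constructor
        · intro hx; rw [← this] at *; linear_combination this.mp (by linear_combination hx)
        · intro hx; linear_combination this.mpr (by linear_combination hx)
      · intro h x
        rw [mem_lineOf, mem_bisector]
        simp only [dotp, nrm, Prod.fst_sub, Prod.snd_sub]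
        constructor
        · intro hx; linear_combination (h x.1 x.2).mp (by linear_combination hx)
        · intro hx; linear_combination (h x.1 x.2).mpr (by linear_combination hx)
    rw [hb1, hb2]
    exact H
end
end

section
/- Let A be a finite set of N points in F² (F a field with char F ≠ 2). Then either some single circle or line contains at least N^{1/2} points of A, or every point a ∈ A determines at least N^{1/2} - 1 distinct nonzero values ‖a - b‖ over b ∈ A; in either case, if ‖a-b‖ is not identically 0 on A×A, the pinned distance number Δ_pin(A) = max_{a∈A} |{‖a-b‖ : b ∈ A}| satisfies Δ_pin(A) ≥ (1/2)·N^{1/2} - 1. -/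
open scoped Classical

noncomputable section

/-- `Γ` is a line in `F²`. -/
def IsLine {F : Type*} [Field F] (Γ : Set (F × F)) : Prop :=
  ∃ p v : F × F, v ≠ 0 ∧ Γ = {x | ∃ t : F, x = p + t • v}

/-- `Γ` is a circle in `F²` (with some center and radius-square). -/
def IsCircle {F : Type*} [Field F] (Γ : Set (F × F)) : Prop :=
  ∃ (p : F × F) (r : F), Γ = {x | nrm (x - p) = r}

section Helpers

variable {F : Type*} [Field F]

lemma nrm_sub_comm (a b : F × F) : nrm (a - b) = nrm (b - a) := by
  simp only [nrm, Prod.fst_sub, Prod.snd_sub]; ring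

lemma key_lin {u1 u2 w1 w2 : F} (hw : w1^2 + w2^2 ≠ 0)
    (h1 : u1*w1 + u2*w2 = 0) (h2 : u2*w1 - u1*w2 = 0) : u1 = 0 ∧ u2 = 0 := by
  constructor
  · have h : u1 * (w1^2 + w2^2) = 0 := by linear_combination w1*h1 - w2*h2
    exact (mul_eq_zero.mp h).resolve_right hw
  · have h : u2 * (w1^2 + w2^2) = 0 := by linear_combination w2*h1 + w1*h2
    exact (mul_eq_zero.mp h).resolve_right hw

lemma quad2 (two : (2:F) ≠ 0) {p1 p2 q1 q2 r d x1 x2 y1 y2 z1 z2 : F}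
    (hw : (q1-p1)^2 + (q2-p2)^2 ≠ 0)
    (hx1 : (x1-p1)^2+(x2-p2)^2 = r) (hx2 : (x1-q1)^2+(x2-q2)^2 = d)
    (hy1 : (y1-p1)^2+(y2-p2)^2 = r) (hy2 : (y1-q1)^2+(y2-q2)^2 = d)
    (hz1 : (z1-p1)^2+(z2-p2)^2 = r) (hz2 : (z1-q1)^2+(z2-q2)^2 = d) :
    (x1 = y1 ∧ x2 = y2) ∨ (x1 = z1 ∧ x2 = z2) ∨ (y1 = z1 ∧ y2 = z2) := by
  set w1 := q1 - p1 with hw1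
  set w2 := q2 - p2 with hw2
  have Lxy : (x1-y1)*w1 + (x2-y2)*w2 = 0 := by
    have h2 : 2*((x1-y1)*w1 + (x2-y2)*w2) = 0 := by
      linear_combination hx1 - hx2 - hy1 + hy2
    exact (mul_eq_zero.mp h2).resolve_left two
  have Lxz : (x1-z1)*w1 + (x2-z2)*w2 = 0 := by
    have h2 : 2*((x1-z1)*w1 + (x2-z2)*w2) = 0 := by
      linear_combination hx1 - hx2 - hz1 + hz2
    exact (mul_eq_zero.mp h2).resolve_left two
  have Lyz : (y1-z1)*w1 + (y2-z2)*w2 = 0 := by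
    have h2 : 2*((y1-z1)*w1 + (y2-z2)*w2) = 0 := by
      linear_combination hy1 - hy2 - hz1 + hz2
    exact (mul_eq_zero.mp h2).resolve_left two
  have hSExy : ((x2-y2)*w1 - (x1-y1)*w2) * (-w2*(x1+y1-2*p1) + w1*(x2+y2-2*p2)) = 0 := by
    linear_combination (w1^2+w2^2)*hx1 - (w1^2+w2^2)*hy1
      - (w1*(x1+y1-2*p1)+w2*(x2+y2-2*p2))*Lxy
  have hSExz : ((x2-z2)*w1 - (x1-z1)*w2) * (-w2*(x1+z1-2*p1) + w1*(x2+z2-2*p2)) = 0 := by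
    linear_combination (w1^2+w2^2)*hx1 - (w1^2+w2^2)*hz1
      - (w1*(x1+z1-2*p1)+w2*(x2+z2-2*p2))*Lxz
  rcases mul_eq_zero.mp hSExy with hS | hE
  · obtain ⟨e1, e2⟩ := key_lin hw Lxy hS
    exact Or.inl ⟨sub_eq_zero.mp e1, sub_eq_zero.mp e2⟩
  · rcases mul_eq_zero.mp hSExz with hS' | hE'
    · obtain ⟨e1, e2⟩ := key_lin hw Lxz hS'
      exact Or.inr (Or.inl ⟨sub_eq_zero.mp e1, sub_eq_zero.mp e2⟩)
    · have hSyz : (y2-z2)*w1 - (y1-z1)*w2 = 0 := by linear_combination hE - hE'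
      obtain ⟨e1, e2⟩ := key_lin hw Lyz hSyz
      exact Or.inr (Or.inr ⟨sub_eq_zero.mp e1, sub_eq_zero.mp e2⟩)

lemma two_circles (two : (2:F) ≠ 0) {p q : F × F} (hpq : nrm (q - p) ≠ 0) {r d : F}
    {x y z : F × F}
    (hx1 : nrm (x - p) = r) (hx2 : nrm (x - q) = d)
    (hy1 : nrm (y - p) = r) (hy2 : nrm (y - q) = d)
    (hz1 : nrm (z - p) = r) (hz2 : nrm (z - q) = d) :
    x = y ∨ x = z ∨ y = z := by
  simp only [nrm, Prod.fst_sub, Prod.snd_sub] at hpq hx1 hx2 hy1 hy2 hz1 hz2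
  rcases quad2 two hpq hx1 hx2 hy1 hy2 hz1 hz2 with h | h | h
  · exact Or.inl (Prod.ext h.1 h.2)
  · exact Or.inr (Or.inl (Prod.ext h.1 h.2))
  · exact Or.inr (Or.inr (Prod.ext h.1 h.2))

lemma line_inj (two : (2:F) ≠ 0) {j a1 a2 b1 b2 c1 c2 c1' c2' : F}
    (hj : j^2 = -1) (hab : (a1-b1)^2+(a2-b2)^2 ≠ 0)
    (hc : c2 - a2 = j*(c1 - a1)) (hc' : c2' - a2 = j*(c1' - a1))
    (hd : (b1-c1)^2+(b2-c2)^2 = (b1-c1')^2+(b2-c2')^2) :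
    c1 = c1' ∧ c2 = c2' := by
  have hT : (a1-b1) + j*(a2-b2) ≠ 0 := by
    intro h
    apply hab
    linear_combination ((a1-b1) - j*(a2-b2))*h + (a2-b2)^2*hj
  have e : c2 = a2 + j*(c1 - a1) := by linear_combination hc
  have e' : c2' = a2 + j*(c1' - a1) := by linear_combination hc'
  subst e e'
  have key : (c1 - c1') * (2*((a1-b1) + j*(a2-b2))) = 0 := by
    linear_combination hd - (c1-c1')*(c1+c1'-2*a1)*hj
  rcases mul_eq_zero.mp key with h | h
  · have h1 : c1 = c1' := sub_eq_zero.mp h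
    exact ⟨h1, by rw [h1]⟩
  · rcases mul_eq_zero.mp h with h2 | h3
    · exact absurd h2 two
    · exact absurd h3 hT

/-- If no circle has many points of A, then every pin sees many distances. -/
lemma pin_many (A : Finset (F × F)) (N : ℕ) (hN : A.card = N)
    (hno : ∀ Γ : Set (F × F), IsCircle Γ → ((A.filter (· ∈ Γ)).card : ℝ) < Real.sqrt N) :
    ∀ a ∈ A, Real.sqrt N ≤ ((A.image (fun b => nrm (a - b))).card : ℝ) := by
  intro a ha
  set f : F × F → F := fun b => nrm (a - b) with hf
  set I := A.image f with hI
  have hIne : I.Nonempty := ⟨f a, Finset.mem_image_of_mem f ha⟩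
  have hcov : A.card = ∑ v ∈ I, (A.filter fun b => f b = v).card :=
    Finset.card_eq_sum_card_fiberwise (fun x hx => Finset.mem_image_of_mem f hx)
  have hfib : ∀ v, ((A.filter fun b => f b = v).card : ℝ) < Real.sqrt N := by
    intro v
    have h := hno {x | nrm (x - a) = v} ⟨a, v, rfl⟩
    have heq : (A.filter (· ∈ ({x | nrm (x - a) = v} : Set (F × F)))) =
        A.filter fun b => f b = v := by
      apply Finset.filter_congr
      intro b _
      simp only [Set.mem_setOf_eq, hf, nrm_sub_comm b a]
    rwa [heq] at h
  have hsum : (N : ℝ) < I.card * Real.sqrt N := by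
    have h : ((∑ v ∈ I, (A.filter fun b => f b = v).card : ℕ) : ℝ) <
        ∑ _v ∈ I, Real.sqrt N := by
      push_cast
      exact Finset.sum_lt_sum_of_nonempty hIne fun v _ => hfib v
    rw [← hcov, hN] at h
    simpa using h
  have hsq : Real.sqrt N * Real.sqrt N = N := Real.mul_self_sqrt (by positivity)
  rcases eq_or_lt_of_le (Real.sqrt_nonneg (N:ℝ)) with h0 | h0
  · rw [← h0]; positivity
  · nlinarith [hsum, hsq]

end Helpers

/-- either some line or circle contains at least `√N` points of `A`,
or every pin `a ∈ A` determines at least `√N - 1` distinct nonzero distances; in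
either case, if the distance is not identically zero on `A × A`, some pin
determines at least `√N / 2 - 1` distances. -/
theorem stmt_6 {F : Type*} [Field F] (hchar : (2 : F) ≠ 0)
    (A : Finset (F × F)) (N : ℕ) (hN : A.card = N) :
    ((∃ Γ : Set (F × F), (IsLine Γ ∨ IsCircle Γ) ∧
        Real.sqrt N ≤ (A.filter (· ∈ Γ)).card) ∨
      (∀ a ∈ A, Real.sqrt N - 1 ≤
        (((A.image (fun b => nrm (a - b))).erase 0).card : ℝ))) ∧
    ((∃ a ∈ A, ∃ b ∈ A, nrm (a - b) ≠ 0) →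
      ∃ a ∈ A, Real.sqrt N / 2 - 1 ≤ ((A.image (fun b => nrm (a - b))).card : ℝ)) := by
  constructor
  · by_cases h : ∃ Γ : Set (F × F), (IsLine Γ ∨ IsCircle Γ) ∧
        Real.sqrt N ≤ (A.filter (· ∈ Γ)).card
    · exact Or.inl h
    · right
      push_neg at h
      intro a ha
      have hk := pin_many A N hN (fun Γ hΓ => h Γ (Or.inr hΓ)) a ha
      set I := A.image fun b => nrm (a - b) with hI
      have h1 : 1 ≤ I.card :=
        Finset.card_pos.mpr ⟨nrm (a-a), Finset.mem_image_of_mem _ ha⟩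
      have h2 : ((I.card - 1 : ℕ) : ℝ) ≤ ((I.erase 0).card : ℝ) := by
        exact_mod_cast Finset.pred_card_le_card_erase
      have hc : ((I.card - 1 : ℕ) : ℝ) = (I.card : ℝ) - 1 := by
        rw [Nat.cast_sub h1]; norm_num
      linarith
  · intro hex
    obtain ⟨a0, ha0, b0, hb0, hab⟩ := hex
    have hN1 : 1 ≤ N := hN ▸ Finset.card_pos.mpr ⟨a0, ha0⟩
    have hsq : Real.sqrt N * Real.sqrt N = N := Real.mul_self_sqrt (by positivity)
    have hs0 : (0:ℝ) ≤ Real.sqrt N := Real.sqrt_nonneg _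
    have hs1 : (1:ℝ) ≤ Real.sqrt N := by
      nlinarith [show (1:ℝ) ≤ (N:ℝ) from by exact_mod_cast hN1]
    set g0 : F × F → F := fun b => nrm (a0 - b) with hg0
    set I := A.image g0 with hI
    have hIne : I.Nonempty := ⟨g0 a0, Finset.mem_image_of_mem _ ha0⟩
    by_cases hk : Real.sqrt N / 2 ≤ (I.card : ℝ)
    · exact ⟨a0, ha0, by linarith⟩
    push_neg at hk
    have hk1 : (1:ℝ) ≤ (I.card : ℝ) := by exact_mod_cast Finset.card_pos.mpr hIne
    have hcov : A.card = ∑ v ∈ I, (A.filter fun b => g0 b = v).card :=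
      Finset.card_eq_sum_card_fiberwise fun x hx => Finset.mem_image_of_mem g0 hx
    have hexv : ∃ v ∈ I, (N:ℝ)/(I.card:ℝ) ≤ ((A.filter fun b => g0 b = v).card : ℝ) := by
      apply Finset.exists_le_of_sum_le hIne
      have e1 : ∑ _v ∈ I, (N:ℝ)/(I.card:ℝ) = (N:ℝ) := by
        rw [Finset.sum_const, nsmul_eq_mul]
        field_simp
      have e2 : ∑ v ∈ I, ((A.filter fun b => g0 b = v).card : ℝ) = (N:ℝ) := by
        rw [show ((N:ℕ):ℝ) = ((A.card : ℕ) : ℝ) from by rw [hN], hcov]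
        push_cast
        rfl
      rw [e1, e2]
    obtain ⟨v, hvI, hv⟩ := hexv
    set B := A.filter fun b => g0 b = v with hB
    have hBA : B ⊆ A := Finset.filter_subset _ _
    have hBmem : ∀ b ∈ B, nrm (b - a0) = v := by
      intro b hb
      rw [← nrm_sub_comm a0 b]
      exact (Finset.mem_filter.mp hb).2
    have hB1 : (1:ℝ) ≤ (B.card : ℝ) := by
      obtain ⟨b, hbA, hbv⟩ := Finset.mem_image.mp hvI
      have : b ∈ B := Finset.mem_filter.mpr ⟨hbA, hbv⟩
      exact_mod_cast Finset.card_pos.mpr ⟨b, this⟩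
    have hM : 2 * Real.sqrt N < (B.card : ℝ) := by
      have hk0 : (0:ℝ) < I.card := by linarith
      have hNle : (N:ℝ) ≤ (B.card : ℝ) * (I.card : ℝ) := by
        rw [div_le_iff₀ hk0] at hv; exact hv
      nlinarith [mul_lt_mul_of_pos_left hk (show (0:ℝ) < (B.card:ℝ) by linarith)]
    by_cases hv0 : v = 0
    · -- isotropic circle: two lines through a0
      subst hv0
      have ha0B : a0 ∈ B := Finset.mem_filter.mpr ⟨ha0, by simp [hg0, nrm]⟩
      have hcard2 : 1 < B.card := by
        have : (1:ℝ) < (B.card : ℝ) := by nlinarith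
        exact_mod_cast this
      obtain ⟨b, hbB, hba⟩ := Finset.exists_mem_ne hcard2 a0
      have hu : (b.1 - a0.1)^2 + (b.2 - a0.2)^2 = 0 := by
        have := hBmem b hbB
        simpa only [nrm, Prod.fst_sub, Prod.snd_sub] using this
      have hu2 : b.2 - a0.2 ≠ 0 := by
        intro h
        apply hba
        have h1 : (b.1 - a0.1)^2 = 0 := by rw [h] at hu; linear_combination hu
        have h1' : b.1 - a0.1 = 0 := by
          exact pow_eq_zero_iff (n := 2) (by norm_num) |>.mp h1
        exact Prod.ext (sub_eq_zero.mp h1') (sub_eq_zero.mp h)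
      set j := (b.1 - a0.1) / (b.2 - a0.2) with hjdef
      have hj : j^2 = -1 := by
        rw [hjdef, div_pow]
        rw [div_eq_iff (pow_ne_zero 2 hu2)]
        linear_combination hu
      set P : F × F → Prop := fun x => x.2 - a0.2 = j*(x.1 - a0.1) with hP
      have hsplit : (B.filter P).card + (B.filter fun x => ¬ P x).card = B.card :=
        Finset.card_filter_add_card_filter_not _
      have hminus : ∀ x ∈ B.filter (fun x => ¬ P x),
          x.2 - a0.2 = (-j)*(x.1 - a0.1) := by
        intro x hx
        obtain ⟨hxB, hxP⟩ := Finset.mem_filter.mp hx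
        have hx0 : (x.1 - a0.1)^2 + (x.2 - a0.2)^2 = 0 := by
          have := hBmem x hxB
          simpa only [nrm, Prod.fst_sub, Prod.snd_sub] using this
        have hprod : ((x.2 - a0.2) - j*(x.1 - a0.1)) * ((x.2 - a0.2) + j*(x.1 - a0.1)) = 0 := by
          linear_combination hx0 - (x.1-a0.1)^2*hj
        rcases mul_eq_zero.mp hprod with h | h
        · exact absurd (by linear_combination h) hxP
        · linear_combination h
      have hbig : ∃ (C : Finset (F×F)) (s : F), C ⊆ B ∧ s^2 = -1 ∧
          (∀ x ∈ C, x.2 - a0.2 = s*(x.1-a0.1)) ∧ Real.sqrt N < (C.card:ℝ) := by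
        rcases le_or_gt ((B.filter P).card : ℝ) (Real.sqrt N) with h | h
        · refine ⟨B.filter (fun x => ¬ P x), -j, Finset.filter_subset _ _,
            by rw [neg_sq]; exact hj, hminus, ?_⟩
          have hcast : ((B.filter P).card : ℝ) + ((B.filter fun x => ¬P x).card : ℝ)
              = (B.card : ℝ) := by exact_mod_cast hsplit
          linarith
        · exact ⟨B.filter P, j, Finset.filter_subset _ _, hj,
            fun x hx => (Finset.mem_filter.mp hx).2, h⟩
      obtain ⟨C, s, hCB, hs, hline, hC⟩ := hbig
      set g : F × F → F := fun c => nrm (b0 - c) with hg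
      have hinj : Set.InjOn g C := by
        intro c hc c' hc' hcc
        have h1 := hline c hc
        have h2 := hline c' hc'
        have habc : (a0.1-b0.1)^2+(a0.2-b0.2)^2 ≠ 0 := by
          simpa only [nrm, Prod.fst_sub, Prod.snd_sub] using hab
        have hd : (b0.1-c.1)^2+(b0.2-c.2)^2 = (b0.1-c'.1)^2+(b0.2-c'.2)^2 := by
          simpa only [hg, nrm, Prod.fst_sub, Prod.snd_sub] using hcc
        obtain ⟨e1, e2⟩ := line_inj hchar hs habc h1 h2 hd
        exact Prod.ext e1 e2
      refine ⟨b0, hb0, ?_⟩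
      have himg : (C.image g).card = C.card := Finset.card_image_of_injOn hinj
      have hsub : C.image g ⊆ A.image g := Finset.image_subset_image (hCB.trans hBA)
      have hle : (C.image g).card ≤ (A.image g).card := Finset.card_le_card hsub
      have hle' : ((C.image g).card : ℝ) ≤ ((A.image g).card : ℝ) := by exact_mod_cast hle
      have himg' : ((C.image g).card : ℝ) = (C.card : ℝ) := by exact_mod_cast himg
      linarith
    · -- nondegenerate circle: distances from a point on it are ≤ 2-to-1
      have hBpos : 0 < B.card := by
        have : (0:ℝ) < (B.card : ℝ) := by linarith
        exact_mod_cast this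
      obtain ⟨b1, hb1B⟩ := Finset.card_pos.mp hBpos
      have hb1A : b1 ∈ A := hBA hb1B
      have hq : nrm (b1 - a0) = v := hBmem b1 hb1B
      have hpq : nrm (b1 - a0) ≠ 0 := by rw [hq]; exact hv0
      set g : F × F → F := fun c => nrm (b1 - c) with hg
      have hfib2 : ∀ d, (B.filter fun c => g c = d).card ≤ 2 := by
        intro d
        by_contra hgt
        push_neg at hgt
        obtain ⟨x, y, z, hx, hy, hz, hxy, hxz, hyz⟩ := Finset.two_lt_card_iff.mp hgt
        obtain ⟨hxB, hxd⟩ := Finset.mem_filter.mp hx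
        obtain ⟨hyB, hyd⟩ := Finset.mem_filter.mp hy
        obtain ⟨hzB, hzd⟩ := Finset.mem_filter.mp hz
        have hx2 : nrm (x - b1) = d := by rw [← nrm_sub_comm b1 x]; exact hxd
        have hy2 : nrm (y - b1) = d := by rw [← nrm_sub_comm b1 y]; exact hyd
        have hz2 : nrm (z - b1) = d := by rw [← nrm_sub_comm b1 z]; exact hzd
        rcases two_circles hchar hpq (hBmem x hxB) hx2 (hBmem y hyB) hy2
          (hBmem z hzB) hz2 with h | h | h
        · exact hxy h
        · exact hxz h
        · exact hyz h
      have hcov2 : B.card = ∑ d ∈ B.image g, (B.filter fun c => g c = d).card :=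
        Finset.card_eq_sum_card_fiberwise fun x hx => Finset.mem_image_of_mem g hx
      have hle : B.card ≤ 2 * (B.image g).card := by
        rw [hcov2]
        calc ∑ d ∈ B.image g, (B.filter fun c => g c = d).card
            ≤ ∑ _d ∈ B.image g, 2 := Finset.sum_le_sum fun d _ => hfib2 d
          _ = 2 * (B.image g).card := by rw [Finset.sum_const, smul_eq_mul, mul_comm]
      refine ⟨b1, hb1A, ?_⟩
      have hsub : B.image g ⊆ A.image g := Finset.image_subset_image hBA
      have h2 : ((B.image g).card : ℝ) ≤ ((A.image g).card : ℝ) := by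
        exact_mod_cast Finset.card_le_card hsub
      have hle' : (B.card : ℝ) ≤ 2 * ((B.image g).card : ℝ) := by exact_mod_cast hle
      linarith
end
end

section
/- Let A be a finite set of N points in F² (F a field with char F ≠ 2) such that at most M points of A lie on any isotropic line, where 2M + 1 < N. Let T = |{(a,b,c) ∈ A³ : ‖a-b‖ = ‖a-c‖ ≠ 0}| and let Δ_pin(A) = max_{a∈A} |{r ∈ F\{0} : ∃ b ∈ A, ‖a-b‖ = r}|. Then Δ_pin(A) · T ≥ N(N - 2M - 1)². -/
open scoped Classical

noncomputable section

/-- `Γ` is isotropic: all pairwise distances between its points vanish. -/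
def IsIsotropic {F : Type*} [Field F] (Γ : Set (F × F)) : Prop :=
  ∀ p ∈ Γ, ∀ q ∈ Γ, nrm (p - q) = 0

/-- The line through `a` with direction `v`. -/
lemma isLine_through {F : Type*} [Field F] (a v : F × F) (hv : v ≠ 0) :
    IsLine {x : F × F | ∃ t : F, x = a + t • v} := ⟨a, v, hv, rfl⟩

lemma isIsotropic_through {F : Type*} [Field F] (a v : F × F) (hv : nrm v = 0) :
    IsIsotropic {x : F × F | ∃ t : F, x = a + t • v} := by
  rintro p ⟨t, rfl⟩ q ⟨s, rfl⟩
  have h : (a + t • v) - (a + s • v) = (t - s) • v := by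
    ext <;> simp <;> ring
  rw [h]
  simp only [nrm, Prod.smul_fst, Prod.smul_snd, smul_eq_mul] at hv ⊢
  linear_combination (t - s) ^ 2 * hv

/-- Bound on the number of points at distance zero from `a`. -/
lemma bad_card_le {F : Type*} [Field F]
    (A : Finset (F × F)) (M : ℕ)
    (hiso : ∀ Γ : Set (F × F), IsLine Γ → IsIsotropic Γ →
      (A.filter (· ∈ Γ)).card ≤ M) (a : F × F) :
    (A.filter (fun b => nrm (a - b) = 0)).card ≤ 2 * M + 1 := by
  by_cases h : ∃ i : F, i ^ 2 = -1
  · obtain ⟨i, hi⟩ := h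
    set L1 : Set (F × F) := {x | ∃ t : F, x = a + t • ((i, 1) : F × F)} with hL1
    set L2 : Set (F × F) := {x | ∃ t : F, x = a + t • ((-i, 1) : F × F)} with hL2
    have hv1 : ((i, 1) : F × F) ≠ 0 := by
      intro h; apply one_ne_zero (α := F); exact congrArg Prod.snd h
    have hv2 : ((-i, 1) : F × F) ≠ 0 := by
      intro h; apply one_ne_zero (α := F); exact congrArg Prod.snd h
    have hn1 : nrm ((i, 1) : F × F) = 0 := by simp [nrm, hi]
    have hn2 : nrm ((-i, 1) : F × F) = 0 := by
      simp only [nrm]; ring_nf; rw [hi]; ring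
    have hsub : A.filter (fun b => nrm (a - b) = 0) ⊆
        A.filter (· ∈ L1) ∪ A.filter (· ∈ L2) := by
      intro b hb
      rw [Finset.mem_filter] at hb
      obtain ⟨hbA, hb0⟩ := hb
      have hfac : (a.1 - b.1 - i * (a.2 - b.2)) * (a.1 - b.1 + i * (a.2 - b.2)) = 0 := by
        have : (a.1 - b.1 - i * (a.2 - b.2)) * (a.1 - b.1 + i * (a.2 - b.2))
            = (a.1 - b.1) ^ 2 - i ^ 2 * (a.2 - b.2) ^ 2 := by ring
        rw [this, hi]
        simp only [nrm, Prod.fst_sub, Prod.snd_sub] at hb0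
        linear_combination hb0
      rcases mul_eq_zero.mp hfac with hc | hc
      · apply Finset.mem_union_left
        rw [Finset.mem_filter]
        refine ⟨hbA, ⟨b.2 - a.2, ?_⟩⟩
        have h1 : b.1 = a.1 + (b.2 - a.2) * i := by linear_combination -hc
        apply Prod.ext
        · simpa using h1
        · simp
      · apply Finset.mem_union_right
        rw [Finset.mem_filter]
        refine ⟨hbA, ⟨b.2 - a.2, ?_⟩⟩
        have h1 : b.1 = a.1 + (b.2 - a.2) * (-i) := by linear_combination -hc
        apply Prod.ext
        · simpa using h1
        · simp
    calc (A.filter (fun b => nrm (a - b) = 0)).card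
        ≤ (A.filter (· ∈ L1) ∪ A.filter (· ∈ L2)).card := Finset.card_le_card hsub
      _ ≤ (A.filter (· ∈ L1)).card + (A.filter (· ∈ L2)).card := Finset.card_union_le _ _
      _ ≤ M + M := add_le_add
            (hiso L1 (isLine_through a _ hv1) (isIsotropic_through a _ hn1))
            (hiso L2 (isLine_through a _ hv2) (isIsotropic_through a _ hn2))
      _ ≤ 2 * M + 1 := by omega
  · have hsub : A.filter (fun b => nrm (a - b) = 0) ⊆ {a} := by
      intro b hb
      rw [Finset.mem_filter] at hb
      obtain ⟨hbA, hb0⟩ := hb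
      simp only [nrm, Prod.fst_sub, Prod.snd_sub] at hb0
      have h2 : a.2 = b.2 := by
        by_contra hne
        apply h
        refine ⟨(a.1 - b.1) / (a.2 - b.2), ?_⟩
        have hd : a.2 - b.2 ≠ 0 := sub_ne_zero.mpr hne
        field_simp
        linear_combination hb0
      have h1 : a.1 = b.1 := by
        have : (a.1 - b.1) ^ 2 = 0 := by
          simpa [h2] using hb0
        have := pow_eq_zero_iff (n := 2) (by norm_num) |>.mp this
        linear_combination this
      simp [Finset.mem_singleton, Prod.ext_iff, h1, h2]
    calc (A.filter (fun b => nrm (a - b) = 0)).card ≤ ({a} : Finset (F × F)).card :=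
          Finset.card_le_card hsub
      _ = 1 := Finset.card_singleton a
      _ ≤ 2 * M + 1 := by omega

/-- if at most `M` points of `A` lie on any isotropic line and
`2M + 1 < N`, then `Δ_pin(A) · T ≥ N (N - 2M - 1)²`. -/
theorem stmt_8 {F : Type*} [Field F] (hchar : (2 : F) ≠ 0)
    (A : Finset (F × F)) (N M : ℕ) (hN : A.card = N) (hM : 2 * M + 1 < N)
    (hiso : ∀ Γ : Set (F × F), IsLine Γ → IsIsotropic Γ →
      (A.filter (· ∈ Γ)).card ≤ M)
    (T : ℕ)
    (hT : T = ((A ×ˢ A ×ˢ A).filter (fun p =>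
        nrm (p.1 - p.2.1) = nrm (p.1 - p.2.2) ∧ nrm (p.1 - p.2.1) ≠ 0)).card)
    (Dpin : ℕ)
    (hD : Dpin = A.sup fun a => ((A.image fun b => nrm (a - b)).erase 0).card) :
    N * (N - 2 * M - 1) ^ 2 ≤ Dpin * T := by
  classical
  set k := N - 2 * M - 1 with hk
  -- per-point pair counts
  set P : F × F → Finset ((F × F) × (F × F)) := fun a =>
    (A ×ˢ A).filter (fun p => nrm (a - p.1) = nrm (a - p.2) ∧ nrm (a - p.1) ≠ 0) with hP
  -- T is the sum over a of the pair counts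
  have hTsum : T = ∑ a ∈ A, (P a).card := by
    rw [hT, Finset.card_filter, Finset.sum_product]
    refine Finset.sum_congr rfl fun a _ => ?_
    rw [hP]
    rw [Finset.card_filter]
  -- per-point estimate
  have key : ∀ a ∈ A, k ^ 2 ≤ Dpin * (P a).card := by
    intro a ha
    set D : Finset F := (A.image fun b => nrm (a - b)).erase 0 with hDa
    set S : Finset (F × F) := A.filter (fun b => nrm (a - b) ≠ 0) with hS
    set cls : F → Finset (F × F) := fun r => A.filter (fun b => nrm (a - b) = r) with hcls
    -- S decomposes fiberwise over D
    have hScard : S.card = ∑ r ∈ D, (cls r).card := by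
      rw [Finset.card_eq_sum_card_fiberwise (f := fun b => nrm (a - b)) (t := D)]
      · refine Finset.sum_congr rfl fun r hr => ?_
        congr 1
        rw [hS, Finset.filter_filter]
        apply Finset.filter_congr
        intro b _
        have hr0 : r ≠ 0 := (Finset.mem_erase.mp hr).1
        constructor
        · rintro ⟨_, h⟩; exact h
        · intro h; exact ⟨h ▸ hr0, h⟩
      · intro b hb
        rw [hS, Finset.mem_coe, Finset.mem_filter] at hb
        exact Finset.mem_erase.mpr ⟨hb.2, Finset.mem_image_of_mem _ hb.1⟩
    -- P a decomposes fiberwise over D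
    have hPcard : (P a).card = ∑ r ∈ D, (cls r).card ^ 2 := by
      rw [Finset.card_eq_sum_card_fiberwise (f := fun p => nrm (a - p.1)) (t := D)]
      · refine Finset.sum_congr rfl fun r hr => ?_
        have hr0 : r ≠ 0 := (Finset.mem_erase.mp hr).1
        have : (P a).filter (fun p => nrm (a - p.1) = r) = cls r ×ˢ cls r := by
          ext p
          simp only [hP, hcls, Finset.mem_filter, Finset.mem_product]
          constructor
          · rintro ⟨⟨⟨h1, h2⟩, heq, _⟩, hr'⟩
            exact ⟨⟨h1, hr'⟩, h2, heq ▸ hr'⟩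
          · rintro ⟨⟨h1, hr1⟩, h2, hr2⟩
            exact ⟨⟨⟨h1, h2⟩, hr1.trans hr2.symm, hr1 ▸ hr0⟩, hr1⟩
        rw [this, Finset.card_product, sq]
      · intro p hp
        simp only [Finset.mem_coe, hP, Finset.mem_filter, Finset.mem_product] at hp
        exact Finset.mem_erase.mpr ⟨hp.2.2, Finset.mem_image_of_mem _ hp.1.1⟩
    -- Cauchy-Schwarz
    have hCS : S.card ^ 2 ≤ D.card * (P a).card := by
      rw [hScard, hPcard]
      exact sq_sum_le_card_mul_sum_sq
    -- D.card ≤ Dpin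
    have hDle : D.card ≤ Dpin := by
      rw [hD, hDa]
      exact Finset.le_sup (f := fun a => ((A.image fun b => nrm (a - b)).erase 0).card) ha
    -- k ≤ S.card
    have hkS : k ≤ S.card := by
      have hsplit := Finset.card_filter_add_card_filter_not
        (s := A) (p := fun b => nrm (a - b) ≠ 0)
      have hbad : (A.filter (fun b => ¬ nrm (a - b) ≠ 0)).card ≤ 2 * M + 1 := by
        have := bad_card_le A M hiso a
        simpa using this
      rw [hN] at hsplit
      rw [hk, ← hS] at *
      omega
    calc k ^ 2 ≤ S.card ^ 2 := Nat.pow_le_pow_left hkS 2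
      _ ≤ D.card * (P a).card := hCS
      _ ≤ Dpin * (P a).card := Nat.mul_le_mul_right _ hDle
  calc N * k ^ 2 = ∑ _a ∈ A, k ^ 2 := by rw [Finset.sum_const, hN, smul_eq_mul]
    _ ≤ ∑ a ∈ A, Dpin * (P a).card := Finset.sum_le_sum key
    _ = Dpin * ∑ a ∈ A, (P a).card := by rw [Finset.mul_sum]
    _ = Dpin * T := by rw [hTsum]
end
end
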